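/- Let d = 2 and define the linear maps E₀(ρ) = Tr(ρ)|0⟩⟨0|, F(ρ) = ⟨0|ρ|0⟩ · 𝟙/2, and their composition G = E₀ ∘ F, which satisfies G(ρ) = ⟨0|ρ|0⟩ |0⟩⟨0|. Then u(E₀) = 0 and u(F) = 0, but u(G) = 1/12; in particular, the unitarity is not monotone under composition of maps. -/

import Mathlib

open Matrix Kronecker ComplexOrder MeasureTheory

/-- `d×d` complex matrices. -/
abbrev Mat (d : ℕ) := Matrix (Fin d) (Fin d) ℂ

/-- Matrices on `ℂ^d ⊗ ℂ^d`. -/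
abbrev Mat2 (d : ℕ) := Matrix (Fin d × Fin d) (Fin d × Fin d) ℂ

noncomputable instance matMeasurableSpace {m n : Type*} : MeasurableSpace (Matrix m n ℂ) :=
  borel _

variable {d : ℕ}

/-- Liouville representation of a linear map in the basis `A`:
`𝓔_{kl} = Tr((A k)† E (A l))`. -/
noncomputable def Liou (A : Fin (d ^ 2) → Mat d) (E : Mat d →ₗ[ℂ] Mat d) :
    Matrix (Fin (d ^ 2)) (Fin (d ^ 2)) ℂ :=
  Matrix.of fun k l => Matrix.trace ((A k)ᴴ * E (A l))

/-- The unitarity `u(E) = Tr(𝓔ᵤ† 𝓔ᵤ)/(d²-1)`, where `𝓔ᵤ` is the lower-right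
`(d²-1)×(d²-1)` (unital) block of the Liouville representation. -/
noncomputable def unitarity (A : Fin (d ^ 2) → Mat d) (E : Mat d →ₗ[ℂ] Mat d) : ℝ :=
  (∑ k ∈ Finset.univ.filter (fun k : Fin (d ^ 2) => (k : ℕ) ≠ 0),
    ∑ l ∈ Finset.univ.filter (fun l : Fin (d ^ 2) => (l : ℕ) ≠ 0),
      ‖Liou A E k l‖ ^ 2) / ((d : ℝ) ^ 2 - 1)

/-- `‖𝓔ₙ‖²`: squared Frobenius norm of the nonunital (bottom-left) column block. -/
noncomputable def nSq (A : Fin (d ^ 2) → Mat d) (E : Mat d →ₗ[ℂ] Mat d) : ℝ :=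
  ∑ k ∈ Finset.univ.filter (fun k : Fin (d ^ 2) => (k : ℕ) ≠ 0),
    ∑ l ∈ Finset.univ.filter (fun l : Fin (d ^ 2) => (l : ℕ) = 0),
      ‖Liou A E k l‖ ^ 2

/-- `‖𝓔_sdl‖²`: squared Frobenius norm of the state-dependent-leakage (top-right) row block. -/
noncomputable def sdlSq (A : Fin (d ^ 2) → Mat d) (E : Mat d →ₗ[ℂ] Mat d) : ℝ :=
  ∑ k ∈ Finset.univ.filter (fun k : Fin (d ^ 2) => (k : ℕ) = 0),
    ∑ l ∈ Finset.univ.filter (fun l : Fin (d ^ 2) => (l : ℕ) ≠ 0),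
      ‖Liou A E k l‖ ^ 2

/-- The average survival rate `S(E) = Tr(E(𝟙))/d` (real part). -/
noncomputable def survival (d : ℕ) (E : Mat d →ₗ[ℂ] Mat d) : ℝ :=
  (Matrix.trace (E 1)).re / d

/-- The swap operator `S` on `ℂ^d ⊗ ℂ^d`, `S(x⊗y) = y⊗x`. -/
def swap (d : ℕ) : Mat2 d :=
  Matrix.of fun p q => if p.1 = q.2 ∧ p.2 = q.1 then 1 else 0

/-- The Choi matrix `∑_{j,k} E(|j⟩⟨k|) ⊗ |j⟩⟨k|`. -/
noncomputable def choi (E : Mat d →ₗ[ℂ] Mat d) : Mat2 d :=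
  Matrix.of fun p q => E (Matrix.single p.2 q.2 1) p.1 q.1

/-- Complete positivity: the Choi matrix is positive semidefinite. -/
def IsCP (E : Mat d →ₗ[ℂ] Mat d) : Prop := (choi E).PosSemidef

/-- Trace preserving. -/
def IsTP (E : Mat d →ₗ[ℂ] Mat d) : Prop := ∀ X : Mat d, (E X).trace = X.trace

/-- Trace nonincreasing on positive semidefinite inputs (with the complex order). -/
def IsTNI (E : Mat d →ₗ[ℂ] Mat d) : Prop :=
  ∀ ρ : Mat d, ρ.PosSemidef → (E ρ).trace ≤ ρ.trace

/-- Hermiticity preserving. -/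
def IsHermPreserving (E : Mat d →ₗ[ℂ] Mat d) : Prop := ∀ X : Mat d, E Xᴴ = (E X)ᴴ

/-- The induced map `E ⊗ F` on `M_{d²}(ℂ) = M_d(ℂ) ⊗ M_d(ℂ)`; it is the unique
linear map satisfying `(E ⊗ F)(A ⊗ₖ B) = E(A) ⊗ₖ F(B)`. -/
noncomputable def tensorMap (E F : Mat d →ₗ[ℂ] Mat d) : Mat2 d →ₗ[ℂ] Mat2 d where
  toFun X := Matrix.of fun p q =>
    ∑ i : Fin d, ∑ j : Fin d, ∑ k : Fin d, ∑ l : Fin d,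
      X (i, k) (j, l) *
        (E (Matrix.single i j 1) p.1 q.1 * F (Matrix.single k l 1) p.2 q.2)
  map_add' X Y := by
    ext p q
    simp [Matrix.add_apply, add_mul, Finset.sum_add_distrib]
  map_smul' c X := by
    ext p q
    simp [Matrix.smul_apply, Finset.mul_sum, smul_eq_mul, mul_assoc]

/-- Conjugation `ρ ↦ U ρ Uᴴ` as a linear map. -/
noncomputable def conjMap (U : Mat d) : Mat d →ₗ[ℂ] Mat d :=
  LinearMap.mulLeft ℂ U ∘ₗ LinearMap.mulRight ℂ Uᴴ

/-- `B₁ = 𝟙_{d²}/d`. -/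
noncomputable def B1 (d : ℕ) : Mat2 d := ((d : ℂ))⁻¹ • 1

/-- `B₂ = (S - 𝟙_{d²}/d)/√(d²-1)`. -/
noncomputable def B2 (d : ℕ) : Mat2 d :=
  ((Real.sqrt ((d : ℝ) ^ 2 - 1) : ℂ))⁻¹ • (swap d - ((d : ℂ))⁻¹ • 1)

/-- The 2×2 matrix `M(E)` with entries `M_{ij} = Tr[Bᵢ† (E⊗E)(Bⱼ)]`. -/
noncomputable def Mmat (E : Mat d →ₗ[ℂ] Mat d) : Matrix (Fin 2) (Fin 2) ℂ :=
  Matrix.of fun i j =>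
    Matrix.trace ((![B1 d, B2 d] i)ᴴ * tensorMap E E (![B1 d, B2 d] j))

/-- Auxiliary: interleave noise `E` and unitary conjugations along a list. -/
noncomputable def seqAux (E : Mat d →ₗ[ℂ] Mat d) : List (Mat d) → Mat d → Mat d
  | [], σ => σ
  | U :: rest, σ => seqAux E rest (U * E σ * Uᴴ)

/-- The output state `(𝓤_{j_m} ∘ E ∘ 𝓤_{j_{m-1}} ∘ E ∘ ⋯ ∘ E ∘ 𝓤_{j_1})(ρ)` for the
sequence of unitaries given by the list (head applied first). -/
noncomputable def seqState (E : Mat d →ₗ[ℂ] Mat d) : List (Mat d) → Mat d → Mat d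
  | [], ρ => ρ
  | U :: rest, ρ => seqAux E rest (U * ρ * Uᴴ)

/-- The state-preparation map `E₀(ρ) = Tr(ρ)|0⟩⟨0|` on qubits. -/
noncomputable def Ezero : Mat 2 →ₗ[ℂ] Mat 2 :=
  (Matrix.traceLinearMap (Fin 2) ℂ ℂ).smulRight (Matrix.single 0 0 1)

/-- The map `F(ρ) = ⟨0|ρ|0⟩ · 𝟙/2` on qubits (i.e. `(1/2)E₀†`). -/
noncomputable def Fhalf : Mat 2 →ₗ[ℂ] Mat 2 where
  toFun ρ := ρ 0 0 • ((2 : ℂ)⁻¹ • (1 : Mat 2))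
  map_add' ρ σ := by simp [Matrix.add_apply, add_smul]
  map_smul' c ρ := by simp [Matrix.smul_apply, smul_smul, mul_assoc]

/-- The composition `G = E₀ ∘ F` satisfies `G(ρ) = ⟨0|ρ|0⟩ |0⟩⟨0|`,
and `u(E₀) = 0`, `u(F) = 0`, but `u(G) = 1/12`: the unitarity is not monotone under
composition. -/
theorem statement_17
    (A : Fin (2 ^ 2) → Mat 2)
    (horth : ∀ k l : Fin (2 ^ 2), Matrix.trace ((A k)ᴴ * A l) = if k = l then 1 else 0)
    (hspan : Submodule.span ℂ (Set.range A) = ⊤)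
    (hA0 : ∀ k : Fin (2 ^ 2), (k : ℕ) = 0 → A k = ((Real.sqrt 2 : ℝ) : ℂ)⁻¹ • 1) :
    (∀ ρ : Mat 2, (Ezero ∘ₗ Fhalf) ρ = ρ 0 0 • Matrix.single 0 0 1) ∧
    unitarity A Ezero = 0 ∧ unitarity A Fhalf = 0 ∧
    unitarity A (Ezero ∘ₗ Fhalf) = 1 / 12 := by
    classical
  -- Explicit formula for `G = Ezero ∘ Fhalf`.
  have hG : ∀ ρ : Mat 2, (Ezero ∘ₗ Fhalf) ρ = ρ 0 0 • Matrix.single 0 0 1 := by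
    intro ρ
    simp [Ezero, Fhalf, LinearMap.smulRight_apply, Matrix.trace_smul, Matrix.trace_one,
      smul_smul, LinearMap.coe_mk, AddHom.coe_mk]
  have hA0' : A 0 = ((Real.sqrt 2 : ℝ) : ℂ)⁻¹ • 1 := hA0 0 rfl
  have hs2 : ((Real.sqrt 2 : ℝ) : ℂ) ≠ 0 := by
    exact_mod_cast Complex.ofReal_ne_zero.mpr (by positivity)
  -- traceless basis elements
  have htr : ∀ l : Fin (2 ^ 2), (l : ℕ) ≠ 0 → Matrix.trace (A l) = 0 := by
    intro l hl
    have h := horth 0 l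
    have hne : (0 : Fin (2 ^ 2)) ≠ l := by
      intro e; exact hl (by rw [← e]; rfl)
    rw [if_neg hne, hA0', Matrix.conjTranspose_smul, Matrix.conjTranspose_one,
      Matrix.smul_mul, Matrix.one_mul, Matrix.trace_smul, smul_eq_mul] at h
    exact (mul_eq_zero.mp h).resolve_left (by simp [hs2])
  have htrH : ∀ k : Fin (2 ^ 2), (k : ℕ) ≠ 0 → Matrix.trace ((A k)ᴴ) = 0 := by
    intro k hk
    rw [Matrix.trace_conjTranspose, htr k hk, star_zero]
  -- u(Ezero) = 0
  have hEz : unitarity A Ezero = 0 := by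
    unfold unitarity
    rw [Finset.sum_eq_zero, zero_div]
    intro k hk
    apply Finset.sum_eq_zero
    intro l hl
    have hl' : (l : ℕ) ≠ 0 := (Finset.mem_filter.mp hl).2
    have : Liou A Ezero k l = 0 := by
      simp [Liou, Ezero, LinearMap.smulRight_apply, htr l hl']
    simp [this]
  -- u(Fhalf) = 0
  have hFh : unitarity A Fhalf = 0 := by
    unfold unitarity
    rw [Finset.sum_eq_zero, zero_div]
    intro k hk
    apply Finset.sum_eq_zero
    intro l hl
    have hk' : (k : ℕ) ≠ 0 := (Finset.mem_filter.mp hk).2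
    have : Liou A Fhalf k l = 0 := by
      simp [Liou, Fhalf, LinearMap.coe_mk, AddHom.coe_mk, Matrix.mul_smul,
        Matrix.trace_smul, smul_eq_mul, Matrix.trace_conjTranspose, htr k hk']
    simp [this]
  -- coefficients of |0⟩⟨0| in the basis A
  set B : Mat 2 := Matrix.single 0 0 1 with hBdef
  set c : Fin (2 ^ 2) → ℂ := fun k => Matrix.trace ((A k)ᴴ * B) with hcdef
  have hc : ∀ k, c k = star (A k 0 0) := by
    intro k
    simp [hcdef, hBdef, Matrix.trace, Matrix.mul_apply, Matrix.single,
      Fin.sum_univ_two, Matrix.conjTranspose_apply, Matrix.diag]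
  have hLiouG : ∀ k l, Liou A (Ezero ∘ₗ Fhalf) k l = A l 0 0 * c k := by
    intro k l
    simp only [Liou, Matrix.of_apply, hG (A l), Matrix.mul_smul, Matrix.trace_smul,
      smul_eq_mul, hcdef, hBdef]
  -- Parseval: ∑ k, ‖c k‖² = 1
  set D : Mat 2 := B - ∑ k, c k • A k with hDdef
  have hDk : ∀ k, Matrix.trace ((A k)ᴴ * D) = 0 := by
    intro k
    simp [hDdef, Matrix.mul_sub, Matrix.mul_sum, Matrix.trace_sub, Matrix.trace_sum,
      Matrix.mul_smul, Matrix.trace_smul, horth, smul_eq_mul, mul_ite, mul_one, mul_zero,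
      Finset.sum_ite_eq, hcdef]
  have hDA : ∀ k, Matrix.trace (Dᴴ * A k) = 0 := by
    intro k
    have h2 : Matrix.trace (((A k)ᴴ * D)ᴴ) = 0 := by
      rw [Matrix.trace_conjTranspose, hDk k, star_zero]
    simpa [Matrix.conjTranspose_mul] using h2
  have hDX : ∀ X : Mat 2, Matrix.trace (Dᴴ * X) = 0 := by
    set φ : Mat 2 →ₗ[ℂ] ℂ :=
      (Matrix.traceLinearMap (Fin 2) ℂ ℂ).comp (LinearMap.mulLeft ℂ Dᴴ) with hφdef
    have hle : Submodule.span ℂ (Set.range A) ≤ LinearMap.ker φ := by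
      rw [Submodule.span_le]
      rintro _ ⟨k, rfl⟩
      simpa [hφdef, LinearMap.mulLeft_apply] using hDA k
    intro X
    have hX : X ∈ LinearMap.ker φ := hle (hspan ▸ Submodule.mem_top)
    simpa [hφdef, LinearMap.mulLeft_apply] using hX
  have hBD : Matrix.trace (Bᴴ * D) = 0 := by
    have : Bᴴ * D = ((Dᴴ * B)ᴴ) := by
      rw [Matrix.conjTranspose_mul, Matrix.conjTranspose_conjTranspose]
    rw [this, Matrix.trace_conjTranspose, hDX B, star_zero]
  have hBA : ∀ k, Matrix.trace (Bᴴ * A k) = star (c k) := by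
    intro k
    have : Bᴴ * A k = (((A k)ᴴ * B)ᴴ) := by
      rw [Matrix.conjTranspose_mul, Matrix.conjTranspose_conjTranspose]
    rw [this, Matrix.trace_conjTranspose]
  have hBB : Matrix.trace (Bᴴ * B) = 1 := by
    simp [hBdef, Matrix.trace, Matrix.mul_apply, Matrix.single,
      Fin.sum_univ_two, Matrix.conjTranspose_apply, Matrix.diag]
  have hBsplit : B = D + ∑ k, c k • A k := by simp [hDdef]
  have hpars : ∑ k, (‖c k‖ ^ 2 : ℝ) = 1 := by
    have h1 : Matrix.trace (Bᴴ * B) = ∑ k, c k * star (c k) := by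
      nth_rewrite 2 [hBsplit]
      rw [Matrix.mul_add, Matrix.trace_add, hBD, zero_add, Matrix.mul_sum,
        Matrix.trace_sum]
      refine Finset.sum_congr rfl fun k _ => ?_
      rw [Matrix.mul_smul, Matrix.trace_smul, hBA k, smul_eq_mul]
    rw [hBB] at h1
    have h2 : ∑ k, c k * star (c k) = ((∑ k, (‖c k‖ ^ 2 : ℝ) : ℝ) : ℂ) := by
      push_cast
      refine Finset.sum_congr rfl fun k _ => ?_
      rw [show star (c k) = (starRingEnd ℂ) (c k) from rfl, Complex.mul_conj']
    rw [h2] at h1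
    exact_mod_cast h1.symm
  have hc0 : (‖c 0‖ ^ 2 : ℝ) = 1 / 2 := by
    have : c 0 = ((Real.sqrt 2 : ℝ) : ℂ)⁻¹ := by
      simp [hcdef, hA0', hBdef, Matrix.trace, Matrix.mul_apply, Matrix.single,
        Fin.sum_univ_two, Matrix.conjTranspose_apply, Matrix.one_apply, Matrix.diag,
        Matrix.smul_apply]
    rw [this]
    rw [norm_inv, Complex.norm_real, Real.norm_eq_abs,
      abs_of_nonneg (Real.sqrt_nonneg 2)]
    rw [← Real.sqrt_inv, Real.sq_sqrt (by norm_num)]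
    norm_num
  have hfilter : Finset.univ.filter (fun k : Fin (2 ^ 2) => ¬ ((k : ℕ) ≠ 0)) = {0} := by
    decide
  have hS : ∑ k ∈ Finset.univ.filter (fun k : Fin (2 ^ 2) => (k : ℕ) ≠ 0),
      (‖c k‖ ^ 2 : ℝ) = 1 / 2 := by
    have hsplit := Finset.sum_filter_add_sum_filter_not Finset.univ
      (fun k : Fin (2 ^ 2) => (k : ℕ) ≠ 0) (fun k => (‖c k‖ ^ 2 : ℝ))
    rw [hfilter, Finset.sum_singleton, hc0, hpars] at hsplit
    linarith
  have hG12 : unitarity A (Ezero ∘ₗ Fhalf) = 1 / 12 := by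
    unfold unitarity
    have hterm : ∀ k l : Fin (2 ^ 2), (‖Liou A (Ezero ∘ₗ Fhalf) k l‖ ^ 2 : ℝ)
        = ‖c k‖ ^ 2 * ‖c l‖ ^ 2 := by
      intro k l
      rw [hLiouG k l, norm_mul, mul_pow]
      have : ‖A l 0 0‖ = ‖c l‖ := by rw [hc l, norm_star]
      rw [this]
      ring
    calc (∑ k ∈ Finset.univ.filter (fun k : Fin (2 ^ 2) => (k : ℕ) ≠ 0),
          ∑ l ∈ Finset.univ.filter (fun l : Fin (2 ^ 2) => (l : ℕ) ≠ 0),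
            ‖Liou A (Ezero ∘ₗ Fhalf) k l‖ ^ 2) / ((2 : ℝ) ^ 2 - 1)
        = ((∑ k ∈ Finset.univ.filter (fun k : Fin (2 ^ 2) => (k : ℕ) ≠ 0), (‖c k‖ ^ 2 : ℝ)) *
           (∑ l ∈ Finset.univ.filter (fun l : Fin (2 ^ 2) => (l : ℕ) ≠ 0), (‖c l‖ ^ 2 : ℝ)))
             / ((2 : ℝ) ^ 2 - 1) := by
          rw [Finset.sum_mul_sum]
          congr 1
          exact Finset.sum_congr rfl fun k _ => Finset.sum_congr rfl fun l _ => hterm k l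
      _ = 1 / 12 := by rw [hS]; norm_num
  exact ⟨hG, hEz, hFh, hG12⟩
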